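/- Let X be a Polish space. Then the hyperspace CL(X) with the Fell topology has an ω^ω-base at every point, consisting of basic neighborhoods of the form (⋂ᵢ Uᵢ⁻) ∩ ((g(α))^c)⁺. -/

import Mathlib

open Set Filter Topology

/-- `CL X`: the nonempty closed subsets of `X`. -/
abbrev CL (X : Type*) [TopologicalSpace X] := {A : Set X // A.Nonempty ∧ IsClosed A}

/-- An `ω^ω`-base of neighborhoods at a point `y` of a space with topology `t`:
a neighborhood base `{U_α : α ∈ ω^ω}` with `U_β ⊆ U_α` whenever `α ≤ β` pointwise. -/
def HasOmegaOmegaBaseAt {Y : Type*} (t : TopologicalSpace Y) (y : Y) : Prop :=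
  ∃ U : (ℕ → ℕ) → Set Y, (∀ α, U α ∈ @nhds Y t y) ∧
    (∀ α β : ℕ → ℕ, α ≤ β → U β ⊆ U α) ∧
    ∀ V ∈ @nhds Y t y, ∃ α, U α ⊆ V

/-- The Vietoris topology on `CL X`, generated by the sets `U⁺` and `U⁻` for `U` open. -/
def vietoris (X : Type*) [TopologicalSpace X] : TopologicalSpace (CL X) :=
  TopologicalSpace.generateFrom
    ({S | ∃ U : Set X, IsOpen U ∧ S = {A : CL X | (A : Set X) ⊆ U}} ∪
     {S | ∃ U : Set X, IsOpen U ∧ S = {A : CL X | ((A : Set X) ∩ U).Nonempty}})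

/-- The Fell topology on `CL X`, generated by the sets `U⁻` for `U` open and
`(Kᶜ)⁺` for `K` compact. -/
def fell (X : Type*) [TopologicalSpace X] : TopologicalSpace (CL X) :=
  TopologicalSpace.generateFrom
    ({S | ∃ U : Set X, IsOpen U ∧ S = {A : CL X | ((A : Set X) ∩ U).Nonempty}} ∪
     {S | ∃ K : Set X, IsCompact K ∧ S = {A : CL X | (A : Set X) ⊆ Kᶜ}})

/-- A basic Fell neighborhood: a set of the form `(⋂ᵢ Uᵢ⁻) ∩ (Kᶜ)⁺` with the `Uᵢ` open
and `K` compact. -/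
def IsFellBasic (X : Type*) [TopologicalSpace X] (S : Set (CL X)) : Prop :=
  ∃ (n : ℕ) (U : Fin n → Set X) (K : Set X), (∀ i, IsOpen (U i)) ∧ IsCompact K ∧
    S = {A : CL X | (∀ i, ((A : Set X) ∩ U i).Nonempty) ∧ (A : Set X) ⊆ Kᶜ}

section KSetHelpers

variable {X : Type*} [MetricSpace X]

/-- The `ω^ω`-indexed monotone family of compact sets avoiding `A`. -/
private def KSet (x : ℕ → X) (A : Set X) (α : ℕ → ℕ) : Set X :=
  {y | 1 / ((α 1 : ℝ) + 1) ≤ Metric.infDist y A} ∩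
    ⋂ k : ℕ, ⋃ n ∈ Finset.range (α (k + 2) + 1), Metric.closedBall (x n) (1 / ((k : ℝ) + 1))

private lemma one_div_nat_pos (n : ℕ) : (0 : ℝ) < 1 / ((n : ℝ) + 1) := by positivity

private lemma KSet_mono {x : ℕ → X} {A : Set X} {α β : ℕ → ℕ} (h : α ≤ β) :
    KSet x A α ⊆ KSet x A β := by
  rintro y ⟨h1, h2⟩
  simp only [Set.mem_setOf_eq] at h1
  refine ⟨?_, ?_⟩
  · simp only [Set.mem_setOf_eq]
    refine le_trans ?_ h1
    apply one_div_le_one_div_of_le (by positivity)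
    have : ((α 1 : ℕ) : ℝ) ≤ ((β 1 : ℕ) : ℝ) := Nat.cast_le.2 (h 1)
    linarith
  · simp only [Set.mem_iInter] at h2 ⊢
    intro k
    refine Set.biUnion_subset_biUnion_left ?_ (h2 k)
    exact Finset.range_subset_range.2 (Nat.add_le_add_right (h (k + 2)) 1)

private lemma KSet_subset_compl {x : ℕ → X} {A : Set X} (α : ℕ → ℕ) :
    A ⊆ (KSet x A α)ᶜ := by
  intro y hy
  rintro ⟨h1, -⟩
  simp only [Set.mem_setOf_eq, Metric.infDist_zero_of_mem hy] at h1
  linarith [one_div_nat_pos (α 1)]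

private lemma isCompact_KSet [CompleteSpace X] (x : ℕ → X) (A : Set X) (α : ℕ → ℕ) :
    IsCompact (KSet x A α) := by
  apply TotallyBounded.isCompact_of_isClosed
  · rw [Metric.totallyBounded_iff]
    intro ε hε
    obtain ⟨k, hk⟩ := exists_nat_one_div_lt hε
    refine ⟨x '' ↑(Finset.range (α (k + 2) + 1)), (Finset.range _).finite_toSet.image x, ?_⟩
    rintro y ⟨-, h2⟩
    have h2' := Set.mem_iInter.1 h2 k
    simp only [Set.mem_iUnion, exists_prop] at h2'
    obtain ⟨n, hn, hyn⟩ := h2'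
    refine Set.mem_biUnion (Set.mem_image_of_mem x hn) ?_
    exact Metric.closedBall_subset_ball hk hyn
  · refine IsClosed.inter (isClosed_le continuous_const (Metric.continuous_infDist_pt A)) ?_
    exact isClosed_iInter fun k =>
      isClosed_biUnion_finset fun n _ => Metric.isClosed_closedBall

private lemma KSet_cofinal {x : ℕ → X} (hx : DenseRange x) {A : Set X}
    (hAcl : IsClosed A) (hAne : A.Nonempty) {K : Set X} (hK : IsCompact K)
    (hKA : K ⊆ Aᶜ) : ∃ α : ℕ → ℕ, K ⊆ KSet x A α := by
  rcases K.eq_empty_or_nonempty with rfl | hKne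
  · exact ⟨fun _ => 0, empty_subset _⟩
  obtain ⟨y0, hy0K, hy0⟩ :=
    hK.exists_isMinOn hKne (Metric.continuous_infDist_pt A).continuousOn
  have hpos : 0 < Metric.infDist y0 A :=
    (hAcl.notMem_iff_infDist_pos hAne).1 (hKA hy0K)
  obtain ⟨N, hN⟩ := exists_nat_one_div_lt hpos
  have hcov : ∀ k : ℕ, ∃ m : ℕ,
      K ⊆ ⋃ n ∈ Finset.range (m + 1), Metric.ball (x n) (1 / ((k : ℝ) + 1)) := by
    intro k
    have hKcov : K ⊆ ⋃ n : ℕ, Metric.ball (x n) (1 / ((k : ℝ) + 1)) := by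
      intro y _
      obtain ⟨n, hn⟩ := Metric.denseRange_iff.1 hx y _ (one_div_nat_pos k)
      exact Set.mem_iUnion.2 ⟨n, Metric.mem_ball.2 hn⟩
    obtain ⟨t, ht⟩ := hK.elim_finite_subcover
      (fun n : ℕ => Metric.ball (x n) (1 / ((k : ℝ) + 1)))
      (fun n => Metric.isOpen_ball) hKcov
    refine ⟨t.sup id, ht.trans ?_⟩
    refine Set.iUnion₂_subset fun n hn y hy => Set.mem_iUnion₂.2 ⟨n, ?_, hy⟩
    exact Finset.mem_range.2 (Nat.lt_succ_of_le (Finset.le_sup (f := id) hn))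
  choose m hm using hcov
  set α₀ : ℕ → ℕ := fun i => if i = 1 then N else m (i - 2) with hα₀
  have hα₀1 : α₀ 1 = N := if_pos rfl
  have hα₀2 : ∀ k, α₀ (k + 2) = m k := by
    intro k
    rw [hα₀]
    simp only
    rw [if_neg (by omega : k + 2 ≠ 1)]
    norm_num
  refine ⟨α₀, fun y hy => ⟨?_, ?_⟩⟩
  · simp only [Set.mem_setOf_eq, hα₀1]
    exact le_trans hN.le (isMinOn_iff.1 hy0 y hy)
  · simp only [Set.mem_iInter, hα₀2]
    intro k
    have := hm k hy
    simp only [Set.mem_iUnion, exists_prop] at this ⊢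
    obtain ⟨n, hn, hyn⟩ := this
    exact ⟨n, hn, Metric.ball_subset_closedBall hyn⟩

end KSetHelpers

/-- If `X` is Polish, then `(CL(X), τ_F)` has at every point an `ω^ω`-base consisting
of basic neighborhoods. -/
theorem polish_fell_omegaOmegaBase_basic
    {X : Type*} [TopologicalSpace X] [PolishSpace X] :
    ∀ A : CL X, ∃ B : (ℕ → ℕ) → Set (CL X),
      (∀ α, IsFellBasic X (B α) ∧ B α ∈ @nhds _ (fell X) A) ∧
      (∀ α β : ℕ → ℕ, α ≤ β → B β ⊆ B α) ∧
      ∀ V ∈ @nhds _ (fell X) A, ∃ α, B α ⊆ V := by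
  classical
  intro A
  obtain ⟨hAne, hAcl⟩ := A.2
  letI := TopologicalSpace.upgradeIsCompletelyMetrizable X
  haveI : Nonempty X := ⟨hAne.some⟩
  obtain ⟨x, hx⟩ := TopologicalSpace.exists_dense_seq X
  -- the countable family of basic open sets meeting `A`
  set Vb : ℕ → Set X := fun j =>
    if (Metric.ball (x j.unpair.1) (1 / ((j.unpair.2 : ℝ) + 1)) ∩ (A : Set X)).Nonempty
    then Metric.ball (x j.unpair.1) (1 / ((j.unpair.2 : ℝ) + 1)) else Set.univ with hVb
  have hVopen : ∀ j, IsOpen (Vb j) := by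
    intro j
    rw [hVb]
    dsimp only
    split
    · exact Metric.isOpen_ball
    · exact isOpen_univ
  have hVA : ∀ j, ((A : Set X) ∩ Vb j).Nonempty := by
    intro j
    rw [hVb]
    dsimp only
    split
    · rename_i h
      obtain ⟨y, hy1, hy2⟩ := h
      exact ⟨y, hy2, hy1⟩
    · simpa using hAne
  have hVsub : ∀ U : Set X, IsOpen U → ((A : Set X) ∩ U).Nonempty →
      ∃ j, Vb j ⊆ U := by
    intro U hU hAU
    obtain ⟨a, haA, haU⟩ := hAU
    obtain ⟨ε, hε, hball⟩ := Metric.isOpen_iff.1 hU a haU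
    obtain ⟨mm, hmm⟩ := exists_nat_one_div_lt (half_pos hε)
    obtain ⟨n, hn⟩ := Metric.denseRange_iff.1 hx a _ (one_div_nat_pos mm)
    refine ⟨Nat.pair n mm, ?_⟩
    have hsub : Metric.ball (x n) (1 / ((mm : ℝ) + 1)) ⊆ U := by
      refine Set.Subset.trans ?_ hball
      intro y hy
      rw [Metric.mem_ball] at hy ⊢
      calc dist y a ≤ dist y (x n) + dist (x n) a := dist_triangle _ _ _
        _ < 1 / ((mm : ℝ) + 1) + 1 / ((mm : ℝ) + 1) := by
            rw [dist_comm (x n) a]; exact add_lt_add hy hn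
        _ < ε / 2 + ε / 2 := add_lt_add hmm hmm
        _ = ε := by ring
    have hmeets : (Metric.ball (x (Nat.pair n mm).unpair.1)
        (1 / (((Nat.pair n mm).unpair.2 : ℝ) + 1)) ∩ (A : Set X)).Nonempty := by
      rw [Nat.unpair_pair]
      exact ⟨a, Metric.mem_ball.2 hn, haA⟩
    rw [hVb]
    dsimp only
    rw [if_pos hmeets, Nat.unpair_pair]
    exact hsub
  -- the family B
  set B : (ℕ → ℕ) → Set (CL X) := fun α =>
    {C : CL X | (∀ j < α 0, ((C : Set X) ∩ Vb j).Nonempty) ∧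
      (C : Set X) ⊆ (KSet x (A : Set X) α)ᶜ} with hB
  -- the generating family of the Fell topology
  set g : Set (Set (CL X)) :=
    ({S | ∃ U : Set X, IsOpen U ∧ S = {A : CL X | ((A : Set X) ∩ U).Nonempty}} ∪
     {S | ∃ K : Set X, IsCompact K ∧ S = {A : CL X | (A : Set X) ⊆ Kᶜ}}) with hg
  have hfell : fell X = TopologicalSpace.generateFrom g := rfl
  -- each B α is open in the Fell topology
  have hBopen : ∀ α, IsOpen[fell X] (B α) := by
    intro α
    have hdecomp : B α = (⋂ j ∈ Finset.range (α 0),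
        {C : CL X | ((C : Set X) ∩ Vb j).Nonempty}) ∩
        {C : CL X | (C : Set X) ⊆ (KSet x (A : Set X) α)ᶜ} := by
      ext C
      simp [hB, Set.mem_iInter]
    rw [hdecomp, hfell]
    letI := TopologicalSpace.generateFrom g
    refine IsOpen.inter (isOpen_biInter_finset fun j _ => ?_) ?_
    · exact TopologicalSpace.isOpen_generateFrom_of_mem
        (Set.mem_union_left _ ⟨Vb j, hVopen j, rfl⟩)
    · exact TopologicalSpace.isOpen_generateFrom_of_mem
        (Set.mem_union_right _ ⟨KSet x (A : Set X) α, isCompact_KSet x _ α, rfl⟩)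
  -- each B α contains A
  have hABα : ∀ α, A ∈ B α :=
    fun α => ⟨fun j _ => hVA j, KSet_subset_compl α⟩
  -- monotonicity
  have hBmono : ∀ α β : ℕ → ℕ, α ≤ β → B β ⊆ B α := by
    intro α β hab C hC
    exact ⟨fun j hj => hC.1 j (lt_of_lt_of_le hj (hab 0)),
      hC.2.trans (Set.compl_subset_compl.2 (KSet_mono hab))⟩
  refine ⟨B, fun α => ⟨?_, ?_⟩, hBmono, ?_⟩
  · -- IsFellBasic
    refine ⟨α 0, fun i => Vb i, KSet x (A : Set X) α, fun i => hVopen i,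
      isCompact_KSet x _ α, ?_⟩
    ext C
    simp only [hB, Set.mem_setOf_eq]
    constructor
    · rintro ⟨h1, h2⟩
      exact ⟨fun i => h1 i i.2, h2⟩
    · rintro ⟨h1, h2⟩
      exact ⟨fun j hj => h1 ⟨j, hj⟩, h2⟩
  · -- B α is a neighborhood of A
    letI : TopologicalSpace (CL X) := fell X
    exact (hBopen α).mem_nhds (hABα α)
  · -- neighborhood base
    intro V hV
    have hV2 : V ∈ @nhds _ (TopologicalSpace.generateFrom g) A := hV
    rw [TopologicalSpace.nhds_generateFrom, ← Filter.generate_eq_biInf] at hV2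
    obtain ⟨t, htg, htfin, hts⟩ := Filter.mem_generate_iff.1 hV2
    -- key: each subbasic set containing A contains some B α
    have key : ∀ s ∈ g, A ∈ s → ∃ α, B α ⊆ s := by
      rintro s (⟨U, hU, rfl⟩ | ⟨K, hK, rfl⟩) hAs
      · obtain ⟨j, hj⟩ := hVsub U hU hAs
        refine ⟨fun _ => j + 1, fun C hC => ?_⟩
        exact (hC.1 j (Nat.lt_succ_self j)).mono (Set.inter_subset_inter_right _ hj)
      · obtain ⟨α, hα⟩ := KSet_cofinal hx hAcl hAne hK (Set.subset_compl_comm.1 hAs)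
        exact ⟨α, fun C hC => hC.2.trans (Set.compl_subset_compl.2 hα)⟩
    have finkey : ∀ t : Set (Set (CL X)), t.Finite →
        (∀ s ∈ t, s ∈ g ∧ A ∈ s) → ∃ α, B α ⊆ ⋂₀ t := by
      intro t ht
      refine Set.Finite.induction_on t ht ?_ ?_
      · intro _
        exact ⟨fun _ => 0, by simp⟩
      · intro a s _ _ ih h
        obtain ⟨α1, hα1⟩ := key a (h a (Set.mem_insert _ _)).1 (h a (Set.mem_insert _ _)).2
        obtain ⟨α2, hα2⟩ := ih fun s' hs' => h s' (Set.mem_insert_of_mem _ hs')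
        refine ⟨α1 ⊔ α2, ?_⟩
        rw [Set.sInter_insert]
        exact Set.subset_inter ((hBmono _ _ le_sup_left).trans hα1)
          ((hBmono _ _ le_sup_right).trans hα2)
    obtain ⟨α, hα⟩ := finkey t htfin fun s hs => ⟨(htg hs).2, (htg hs).1⟩
    exact ⟨α, hα.trans hts⟩
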